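/- Let K be a Galois number field of degree k ≥ 3 with incomplete norm form f. There is a constant C = C(K) such that for every rational prime p that splits completely in O_K (i.e., p lies below degree-one prime ideals), |ϱ(p) − k| ≤ C · p^{−1 + 1/k}. -/

import Mathlib

open NumberField

noncomputable section

/-- The incomplete norm form f(x) = N(x₁ω₁ + … + x_{k-1}ω_{k-1}). -/
def incNormForm (K : Type) [Field K] [NumberField K] (k : ℕ)
    (ω : Module.Basis (Fin k) ℤ (𝓞 K)) (x : Fin (k-1) → ℤ) : ℤ :=
  Algebra.norm ℤ (∑ i : Fin (k-1), x i • ω (Fin.castLE (Nat.sub_le k 1) i))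

/-- ϱ(n) = n^{-(k-2)} #{x mod n : n ∣ f(x)}. -/
def varrho (K : Type) [Field K] [NumberField K] (k : ℕ)
    (ω : Module.Basis (Fin k) ℤ (𝓞 K)) (n : ℕ) : ℝ :=
  (Nat.card {x : Fin (k-1) → ZMod n //
      (n : ℤ) ∣ incNormForm K k ω (fun i => ((x i).val : ℤ))} : ℝ) / (n : ℝ) ^ (k - 2)

/-- Combinatorial core: Bonferroni-type inequality. -/
lemma count_core {G V : Type*} [Fintype G] [Fintype V] [DecidableEq G] [DecidableEq V]
    (L : G → V → Prop) [∀ σ x, Decidable (L σ x)] :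
    ∑ σ : G, (Finset.univ.filter (L σ)).card ≤
      (Finset.univ.filter (fun x => ∃ σ, L σ x)).card
      + ∑ q ∈ (Finset.univ : Finset G).offDiag,
          (Finset.univ.filter (fun x => L q.1 x ∧ L q.2 x)).card := by
  classical
  have h1 : ∑ σ : G, (Finset.univ.filter (L σ)).card
      = ∑ x : V, (Finset.univ.filter (fun σ => L σ x)).card := by
    simp only [Finset.card_filter]
    rw [Finset.sum_comm]
  have h2 : ∑ q ∈ (Finset.univ : Finset G).offDiag,
        (Finset.univ.filter (fun x => L q.1 x ∧ L q.2 x)).card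
      = ∑ x : V, ((Finset.univ.filter (fun σ => L σ x)).offDiag).card := by
    simp only [Finset.card_filter]
    rw [Finset.sum_comm]
    refine Finset.sum_congr rfl fun x _ => ?_
    have : (Finset.univ.filter (fun σ => L σ x)).offDiag
        = (Finset.univ : Finset G).offDiag.filter (fun q => L q.1 x ∧ L q.2 x) := by
      ext q
      simp [Finset.mem_offDiag, and_comm, and_assoc, and_left_comm]
    rw [this, Finset.card_filter]
  have h3 : (Finset.univ.filter (fun x => ∃ σ, L σ x)).card
      = ∑ x : V, if (∃ σ, L σ x) then 1 else 0 := Finset.card_filter _ _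
  rw [h1, h2, h3, ← Finset.sum_add_distrib]
  refine Finset.sum_le_sum fun x _ => ?_
  set m := (Finset.univ.filter (fun σ => L σ x)).card with hm
  rw [Finset.offDiag_card, ← hm]
  by_cases h : ∃ σ, L σ x
  · rw [if_pos h]
    rcases Nat.eq_zero_or_pos m with h0 | h0
    · omega
    · have hsq : m + m ≤ m * m + 1 := by nlinarith
      omega
  · rw [if_neg h]
    have : m = 0 := by
      rw [hm, Finset.card_eq_zero, Finset.filter_eq_empty_iff]
      intro σ _ hσ
      exact h ⟨σ, hσ⟩
    omega

lemma count_upper {G V : Type*} [Fintype G] [Fintype V] [DecidableEq V]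
    (L : G → V → Prop) [∀ σ x, Decidable (L σ x)] :
    (Finset.univ.filter (fun x => ∃ σ, L σ x)).card ≤
      ∑ σ : G, (Finset.univ.filter (L σ)).card := by
  classical
  have h1 : ∑ σ : G, (Finset.univ.filter (L σ)).card
      = ∑ x : V, (Finset.univ.filter (fun σ => L σ x)).card := by
    simp only [Finset.card_filter]
    rw [Finset.sum_comm]
  rw [h1, Finset.card_filter]
  refine Finset.sum_le_sum fun x _ => ?_
  by_cases h : ∃ σ, L σ x
  · rw [if_pos h]
    obtain ⟨σ, hσ⟩ := h
    exact Finset.card_pos.mpr ⟨σ, by simp [hσ]⟩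
  · rw [if_neg h]; exact Nat.zero_le _

section Sep

variable (K : Type) [Field K] [NumberField K] [IsGalois ℚ K] (k : ℕ)

/-- If two automorphisms agree on ω₁,…,ω_{k-1} then they are equal. -/
lemma sep_of_agree (hk : 3 ≤ k) (hdeg : Module.finrank ℚ K = k)
    (ω : Module.Basis (Fin k) ℤ (𝓞 K)) (σ τ : K ≃ₐ[ℚ] K)
    (h : ∀ i : Fin (k-1),
      σ (algebraMap (𝓞 K) K (ω (Fin.castLE (Nat.sub_le k 1) i)))
        = τ (algebraMap (𝓞 K) K (ω (Fin.castLE (Nat.sub_le k 1) i)))) :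
    σ = τ := by
  classical
  set α : K ≃ₐ[ℚ] K := τ⁻¹ * σ with hα
  suffices hone : α = 1 by
    have := congrArg (fun g => τ * g) hone
    simpa [hα, mul_assoc] using this
  by_contra hne
  set H : Subgroup (K ≃ₐ[ℚ] K) := Subgroup.zpowers α with hH
  set bK : Module.Basis (Fin k) ℚ K :=
    Module.Basis.localizationLocalization ℚ (nonZeroDivisors ℤ) K ω with hbK
  have hbKa : ∀ j, bK j = algebraMap (𝓞 K) K (ω j) := fun j =>
    Module.Basis.localizationLocalization_apply ℚ (nonZeroDivisors ℤ) K ω j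
  have hfix : ∀ i : Fin (k-1),
      α (bK (Fin.castLE (Nat.sub_le k 1) i)) = bK (Fin.castLE (Nat.sub_le k 1) i) := by
    intro i
    rw [hbKa]
    show τ⁻¹ (σ _) = _
    rw [h i]
    exact τ.symm_apply_apply _
  have hmem : ∀ i : Fin (k-1),
      bK (Fin.castLE (Nat.sub_le k 1) i) ∈ IntermediateField.fixedField H := by
    intro i
    intro g
    obtain ⟨g, hg⟩ := g
    obtain ⟨n, rfl⟩ := Subgroup.mem_zpowers_iff.mp hg
    show (α ^ n) _ = _
    have hnat : ∀ m : ℕ, (α ^ m) (bK (Fin.castLE (Nat.sub_le k 1) i))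
        = bK (Fin.castLE (Nat.sub_le k 1) i) := by
      intro m
      induction m with
      | zero => simp
      | succ m ih =>
        rw [pow_succ]
        show (α ^ m) (α _) = _
        rw [hfix i, ih]
    rcases n with n | n
    · rw [show (Int.ofNat n) = (n : ℤ) from rfl, zpow_natCast]; exact hnat n
    · rw [zpow_negSucc]
      have hb := hnat (n + 1)
      set β := α ^ (n + 1) with hβ
      calc β⁻¹ (bK (Fin.castLE (Nat.sub_le k 1) i))
          = β⁻¹ (β (bK (Fin.castLE (Nat.sub_le k 1) i))) := by rw [hb]
        _ = _ := β.symm_apply_apply _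
  have hli : LinearIndependent ℚ
      (fun i : Fin (k-1) =>
        (⟨bK (Fin.castLE (Nat.sub_le k 1) i), hmem i⟩ : IntermediateField.fixedField H)) := by
    apply LinearIndependent.of_comp
      (IntermediateField.fixedField H).val.toLinearMap
    have : ((IntermediateField.fixedField H).val.toLinearMap ∘
        fun i : Fin (k-1) =>
          (⟨bK (Fin.castLE (Nat.sub_le k 1) i), hmem i⟩ : IntermediateField.fixedField H))
        = fun i : Fin (k-1) => bK (Fin.castLE (Nat.sub_le k 1) i) := rfl
    rw [this]
    exact bK.linearIndependent.comp _ (Fin.castLE_injective _)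
  have h1 : k - 1 ≤ Module.finrank ℚ (IntermediateField.fixedField H) := by
    simpa using hli.fintype_card_le_finrank
  have h2 : Module.finrank (IntermediateField.fixedField H) K = Nat.card H := by
    rw [IntermediateField.finrank_fixedField_eq_card, Nat.card_eq_fintype_card]
  have h3 : Nat.card H = orderOf α := Nat.card_zpowers α
  have h4 : 2 ≤ orderOf α := by
    have hpos : 0 < orderOf α := orderOf_pos α
    have : orderOf α ≠ 1 := fun hone => hne (orderOf_eq_one_iff.mp hone)
    omega
  have h5 : Module.finrank ℚ (IntermediateField.fixedField H)
      * Module.finrank (IntermediateField.fixedField H) K = k := by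
    rw [Module.finrank_mul_finrank, hdeg]
  rw [h2, h3] at h5
  have := Nat.mul_le_mul h1 h4
  omega

/-- The integral norm is the product of the Galois-restricted automorphisms. -/
lemma normProd (y : 𝓞 K) :
    algebraMap ℤ (𝓞 K) (Algebra.norm ℤ y)
      = ∏ σ : K ≃ₐ[ℚ] K, galRestrict ℤ ℚ K (𝓞 K) σ y := by
  rw [prod_galRestrict_eq_norm]
  congr 1
  apply (algebraMap ℤ ℚ).injective_int
  rw [IsIntegralClosure.algebraMap_mk']
  rw [show (algebraMap ℤ ℚ) (Algebra.norm ℤ y) = ((Algebra.norm ℤ y : ℤ) : ℚ) from rfl]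
  rw [Algebra.coe_norm_int]

end Sep


section Main

variable (K : Type) [Field K] [NumberField K] [IsGalois ℚ K] (k : ℕ)

/-- Abbreviation for the restricted Galois action on the ring of integers. -/
def gR (σ : K ≃ₐ[ℚ] K) : 𝓞 K ≃ₐ[ℤ] 𝓞 K := galRestrict ℤ ℚ K (𝓞 K) σ

/-- The first k-1 basis vectors. -/
def bvec (ω : Module.Basis (Fin k) ℤ (𝓞 K)) (i : Fin (k-1)) : 𝓞 K :=
  ω (Fin.castLE (Nat.sub_le k 1) i)

open Classical in
/-- A nonzero integer divisible by all bad primes. -/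
def sepProd (ω : Module.Basis (Fin k) ℤ (𝓞 K)) : ℤ :=
  ∏ q : (K ≃ₐ[ℚ] K) × (K ≃ₐ[ℚ] K),
    (if h : ∃ i : Fin (k-1), gR K q.1 (bvec K k ω i) ≠ gR K q.2 (bvec K k ω i)
     then Algebra.norm ℤ (gR K q.1 (bvec K k ω h.choose) - gR K q.2 (bvec K k ω h.choose))
     else 1)

lemma sepProd_ne_zero (ω : Module.Basis (Fin k) ℤ (𝓞 K)) : sepProd K k ω ≠ 0 := by
  rw [sepProd]
  rw [Finset.prod_ne_zero_iff]
  intro q _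
  by_cases h : ∃ i : Fin (k-1), gR K q.1 (bvec K k ω i) ≠ gR K q.2 (bvec K k ω i)
  · rw [dif_pos h]
    rw [Algebra.norm_ne_zero_iff]
    exact sub_ne_zero.mpr h.choose_spec
  · rw [dif_neg h]
    exact one_ne_zero

lemma normProd' (y : 𝓞 K) :
    algebraMap ℤ (𝓞 K) (Algebra.norm ℤ y) = ∏ σ : K ≃ₐ[ℚ] K, gR K σ y :=
  normProd K y

set_option maxHeartbeats 1000000 in
set_option synthInstance.maxHeartbeats 400000 in
lemma good_prime_bound (hk : 3 ≤ k) (hdeg : Module.finrank ℚ K = k)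
    (ω : Module.Basis (Fin k) ℤ (𝓞 K)) (hω1 : ω ⟨0, lt_of_lt_of_le (by norm_num) hk⟩ = 1)
    (p : ℕ) (hp : p.Prime)
    (hsplit : ∀ P : Ideal (𝓞 K), P.IsMaximal → (p : 𝓞 K) ∈ P → Ideal.absNorm P = p)
    (hgood : ¬ ((p : ℤ) ∣ sepProd K k ω)) :
    |varrho K k ω p - k| ≤ (k:ℝ)^2 / p := by
  classical
  haveI : Fact p.Prime := ⟨hp⟩
  -- p is not a unit in 𝓞 K
  have hnormp : Algebra.norm ℤ ((p : ℕ) : 𝓞 K) = (p:ℤ)^k := by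
    have h1 : ((Algebra.norm ℤ ((p:ℕ) : 𝓞 K) : ℤ) : ℚ) = (((p:ℤ)^k : ℤ) : ℚ) := by
      rw [Algebra.coe_norm_int]
      rw [show (((p:ℕ) : 𝓞 K) : K) = algebraMap ℚ K ((p:ℕ) : ℚ) by simp]
      rw [Algebra.norm_algebraMap, hdeg]
      push_cast
      ring
    exact_mod_cast h1
  have hpnu : ¬ IsUnit ((p:ℕ) : 𝓞 K) := by
    intro h
    have h2 := h.map (Algebra.norm ℤ)
    rw [hnormp] at h2
    have h3 := Int.isUnit_iff.mp h2
    have h4 : (2:ℤ) ≤ (p:ℤ) := by exact_mod_cast hp.two_le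
    have h5 : (2:ℤ)^k ≤ (p:ℤ)^k := pow_le_pow_left₀ (by norm_num) h4 k
    have h6 : (2:ℤ) ≤ 2^k := le_self_pow₀ (by norm_num) (by omega)
    rcases h3 with h3 | h3 <;> omega
  obtain ⟨P, hPmax, hPle⟩ := Ideal.exists_le_maximal (Ideal.span {((p:ℕ) : 𝓞 K)})
    (by rw [Ne, Ideal.span_singleton_eq_top]; exact hpnu)
  have hpinP : ((p:ℕ) : 𝓞 K) ∈ P := hPle (Ideal.subset_span rfl)
  have hnormP : Ideal.absNorm P = p := hsplit P hPmax hpinP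
  have hcardQ : Nat.card (𝓞 K ⧸ P) = p := by
    rwa [Ideal.absNorm_apply, Submodule.cardQuot_apply] at hnormP
  haveI : Finite (𝓞 K ⧸ P) := Nat.finite_of_card_ne_zero (by rw [hcardQ]; exact hp.pos.ne')
  haveI : Fintype (𝓞 K ⧸ P) := Fintype.ofFinite _
  have hcardQ' : Fintype.card (𝓞 K ⧸ P) = p := by rw [← Nat.card_eq_fintype_card]; exact hcardQ
  set e := ZMod.ringEquivOfPrime (𝓞 K ⧸ P) hp hcardQ' with he
  set ψ : 𝓞 K →+* ZMod p := (e.symm : (𝓞 K ⧸ P) →+* ZMod p).comp (Ideal.Quotient.mk P) with hψ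
  have hker : ∀ a : 𝓞 K, ψ a = 0 ↔ a ∈ P := by
    intro a
    constructor
    · intro h0
      have h1 : Ideal.Quotient.mk P a = 0 := by
        apply e.symm.injective
        simpa [hψ] using h0
      exact Ideal.Quotient.eq_zero_iff_mem.mp h1
    · intro hmem
      have h1 : Ideal.Quotient.mk P a = 0 := Ideal.Quotient.eq_zero_iff_mem.mpr hmem
      simp [hψ, h1]
  set c : (K ≃ₐ[ℚ] K) → Fin (k-1) → ZMod p := fun σ i => ψ (gR K σ (bvec K k ω i)) with hc
  have hi0 : (0:ℕ) < k - 1 := by omega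
  have hc0 : ∀ σ, c σ ⟨0, hi0⟩ = 1 := by
    intro σ
    have hb0 : bvec K k ω ⟨0, hi0⟩ = 1 := hω1
    rw [hc]
    simp only [hb0, map_one]
  -- injectivity of the coefficient vectors
  have hcinj : Function.Injective c := by
    intro σ τ hcs
    by_contra hne
    have hex : ∃ i : Fin (k-1), gR K σ (bvec K k ω i) ≠ gR K τ (bvec K k ω i) := by
      by_contra hall
      push_neg at hall
      apply hne
      apply sep_of_agree K k hk hdeg ω σ τ
      intro i
      have h1 := congrArg (algebraMap (𝓞 K) K) (hall i)
      rw [gR, gR] at h1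
      rwa [algebraMap_galRestrict_apply, algebraMap_galRestrict_apply] at h1
    have hzero : ψ (gR K σ (bvec K k ω hex.choose) - gR K τ (bvec K k ω hex.choose)) = 0 := by
      rw [map_sub, sub_eq_zero]
      have h1 : c σ hex.choose = c τ hex.choose := by rw [hcs]
      simpa [hc] using h1
    have hmemP := (hker _).mp hzero
    have h1 : (p:ℤ) ∣ Algebra.norm ℤ (gR K σ (bvec K k ω hex.choose)
        - gR K τ (bvec K k ω hex.choose)) := by
      have h2 : Ideal.absNorm P ∣ Ideal.absNorm (Ideal.span
          {gR K σ (bvec K k ω hex.choose) - gR K τ (bvec K k ω hex.choose)}) :=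
        Ideal.absNorm_dvd_absNorm_of_le ((Ideal.span_singleton_le_iff_mem _).mpr hmemP)
      rw [Ideal.absNorm_span_singleton, hnormP] at h2
      exact (Int.natCast_dvd_natCast.mpr h2).trans (Int.natAbs_dvd.mpr dvd_rfl)
    have h2 : Algebra.norm ℤ (gR K σ (bvec K k ω hex.choose)
        - gR K τ (bvec K k ω hex.choose)) ∣ sepProd K k ω := by
      have h3 := Finset.dvd_prod_of_mem
        (fun q : (K ≃ₐ[ℚ] K) × (K ≃ₐ[ℚ] K) =>
          (if h : ∃ i : Fin (k-1), gR K q.1 (bvec K k ω i) ≠ gR K q.2 (bvec K k ω i)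
           then Algebra.norm ℤ (gR K q.1 (bvec K k ω h.choose) - gR K q.2 (bvec K k ω h.choose))
           else 1))
        (Finset.mem_univ ((σ, τ) : (K ≃ₐ[ℚ] K) × (K ≃ₐ[ℚ] K)))
      simp only [] at h3
      rw [dif_pos hex] at h3
      unfold sepProd
      exact h3
    exact hgood (h1.trans h2)
  -- linear algebra over ZMod p
  set L : (K ≃ₐ[ℚ] K) → (Fin (k-1) → ZMod p) → Prop :=
    fun σ x => ∑ i, c σ i * x i = 0 with hL
  set Lm : (K ≃ₐ[ℚ] K) → ((Fin (k-1) → ZMod p) →ₗ[ZMod p] ZMod p) :=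
    fun σ => ∑ i, c σ i • (LinearMap.proj i) with hLm
  have hLm_apply : ∀ σ x, Lm σ x = ∑ i, c σ i * x i := by
    intro σ x
    simp [hLm, smul_eq_mul]
  -- the divisibility condition is a union of hyperplanes
  have hcast : ∀ x : Fin (k-1) → ZMod p, ∀ i, (((x i).val : ℤ) : ZMod p) = x i := by
    intro x i
    push_cast
    simp [ZMod.natCast_val, ZMod.cast_id]
  have hcond : ∀ x : Fin (k-1) → ZMod p,
      ((p:ℤ) ∣ incNormForm K k ω (fun i => ((x i).val : ℤ))) ↔ ∃ σ, L σ x := by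
    intro x
    rw [← ZMod.intCast_zmod_eq_zero_iff_dvd]
    have hy : ((incNormForm K k ω (fun i => ((x i).val : ℤ)) : ℤ) : ZMod p)
        = ∏ σ : K ≃ₐ[ℚ] K, (∑ i, c σ i * x i) := by
      rw [show incNormForm K k ω (fun i => ((x i).val : ℤ))
          = Algebra.norm ℤ (∑ i : Fin (k-1), ((x i).val : ℤ) • bvec K k ω i) from rfl]
      calc ((Algebra.norm ℤ (∑ i : Fin (k-1), ((x i).val : ℤ) • bvec K k ω i) : ℤ) : ZMod p)
          = ψ ((Algebra.norm ℤ (∑ i : Fin (k-1), ((x i).val : ℤ) • bvec K k ω i) : ℤ) : 𝓞 K) :=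
            (map_intCast ψ _).symm
        _ = ψ (algebraMap ℤ (𝓞 K)
              (Algebra.norm ℤ (∑ i : Fin (k-1), ((x i).val : ℤ) • bvec K k ω i))) := by
            rw [eq_intCast (algebraMap ℤ (𝓞 K))]
        _ = ψ (∏ σ : K ≃ₐ[ℚ] K, gR K σ (∑ i : Fin (k-1), ((x i).val : ℤ) • bvec K k ω i)) := by
            rw [normProd']
        _ = ∏ σ : K ≃ₐ[ℚ] K, ψ (gR K σ (∑ i : Fin (k-1), ((x i).val : ℤ) • bvec K k ω i)) :=
            map_prod ψ _ _
        _ = ∏ σ : K ≃ₐ[ℚ] K, (∑ i, c σ i * x i) := by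
            refine Finset.prod_congr rfl fun σ _ => ?_
            rw [map_sum, map_sum]
            refine Finset.sum_congr rfl fun i _ => ?_
            rw [map_zsmul, map_zsmul, zsmul_eq_mul, hc]
            rw [hcast x i]
            ring
    rw [hy, Finset.prod_eq_zero_iff]
    simp [hL]
  -- translate the cardinalities
  set N := (Finset.univ.filter (fun x : Fin (k-1) → ZMod p => ∃ σ, L σ x)).card with hN
  -- kernel ranks
  have hkrk : ∀ σ, Module.finrank (ZMod p) (LinearMap.ker (Lm σ)) = k - 2 := by
    intro σ
    have hsurj : Function.Surjective (Lm σ) := by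
      intro z
      refine ⟨z • (Pi.single (⟨0, hi0⟩ : Fin (k-1)) (1 : ZMod p) : Fin (k-1) → ZMod p), ?_⟩
      rw [map_smul]
      have h1 : Lm σ (Pi.single (⟨0, hi0⟩ : Fin (k-1)) (1 : ZMod p)) = 1 := by
        rw [hLm_apply]
        rw [Finset.sum_eq_single (⟨0, hi0⟩ : Fin (k-1))]
        · simp [hc0]
        · intro j _ hj
          simp [Pi.single_eq_of_ne hj]
        · simp
      rw [h1, smul_eq_mul, mul_one]
    have hrange : LinearMap.range (Lm σ) = ⊤ := LinearMap.range_eq_top.mpr hsurj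
    have hrk := LinearMap.finrank_range_add_finrank_ker (Lm σ)
    rw [hrange, finrank_top, Module.finrank_self] at hrk
    have hV : Module.finrank (ZMod p) (Fin (k-1) → ZMod p) = k - 1 := by
      simp [Module.finrank_fintype_fun_eq_card]
    rw [hV] at hrk
    clear * - hrk hk
    omega
  have hTcard : ∀ σ, (Finset.univ.filter (L σ)).card = p^(k-2) := by
    intro σ
    have h1 : (Finset.univ.filter (L σ)).card = Fintype.card {x // L σ x} :=
      (Fintype.card_subtype _).symm
    have h2 : Fintype.card {x // L σ x} = Fintype.card (LinearMap.ker (Lm σ)) :=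
      Fintype.card_congr (Equiv.subtypeEquivRight (fun x => by
        simp [hL, LinearMap.mem_ker, hLm_apply]))
    rw [h1, h2, Module.card_eq_pow_finrank (K := ZMod p), hkrk, ZMod.card]
  have hTpair : ∀ σ τ, σ ≠ τ →
      (Finset.univ.filter (fun x => L σ x ∧ L τ x)).card ≤ p^(k-3) := by
    intro σ τ hne
    set W : Submodule (ZMod p) (Fin (k-1) → ZMod p) :=
      LinearMap.ker (Lm σ) ⊓ LinearMap.ker (Lm τ) with hW
    have h1 : (Finset.univ.filter (fun x => L σ x ∧ L τ x)).card
        = Fintype.card {x // L σ x ∧ L τ x} := (Fintype.card_subtype _).symm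
    have h2 : Fintype.card {x // L σ x ∧ L τ x} = Fintype.card W :=
      Fintype.card_congr (Equiv.subtypeEquivRight (fun x => by
        simp [hW, Submodule.mem_inf, LinearMap.mem_ker, hLm_apply, hL]))
    -- the witness vector showing the inclusion W < ker (Lm σ) is strict
    have hcne : c σ ≠ c τ := fun h => hne (hcinj h)
    obtain ⟨j, hj⟩ := Function.ne_iff.mp hcne
    have hj0 : j ≠ ⟨0, hi0⟩ := by
      intro h
      rw [h, hc0, hc0] at hj
      exact hj rfl
    set xw : Fin (k-1) → ZMod p :=
      (Pi.single j (1 : ZMod p) : Fin (k-1) → ZMod p)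
        - c σ j • (Pi.single (⟨0, hi0⟩ : Fin (k-1)) (1 : ZMod p) : Fin (k-1) → ZMod p) with hxw
    have hsingle : ∀ (υ : K ≃ₐ[ℚ] K) (a : Fin (k-1)),
        Lm υ (Pi.single a (1 : ZMod p)) = c υ a := by
      intro υ a
      rw [hLm_apply]
      rw [Finset.sum_eq_single a]
      · simp
      · intro b _ hb
        simp [Pi.single_eq_of_ne hb]
      · simp
    have hsum : ∀ υ : K ≃ₐ[ℚ] K, Lm υ xw = c υ j - c σ j * c υ ⟨0, hi0⟩ := by
      intro υ
      rw [hxw, map_sub, map_smul, hsingle, hsingle, smul_eq_mul]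
    have hw1 : xw ∈ LinearMap.ker (Lm σ) := by
      rw [LinearMap.mem_ker, hsum, hc0, mul_one, sub_self]
    have hw2 : xw ∉ W := by
      rw [hW, Submodule.mem_inf]
      rintro ⟨-, h⟩
      rw [LinearMap.mem_ker, hsum, hc0, mul_one, sub_eq_zero] at h
      exact hj h.symm
    have hlt : W < LinearMap.ker (Lm σ) :=
      lt_of_le_of_ne inf_le_left (fun h => hw2 (h ▸ hw1))
    have hfr : Module.finrank (ZMod p) W < k - 2 := by
      rw [← hkrk σ]
      exact Submodule.finrank_lt_finrank_of_lt hlt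
    have h3 : Fintype.card W = p ^ Module.finrank (ZMod p) W := by
      rw [Module.card_eq_pow_finrank (K := ZMod p), ZMod.card]
    rw [h1, h2, h3]
    exact Nat.pow_le_pow_right hp.pos (by omega)
  -- assemble the counting bounds
  have hG : Fintype.card (K ≃ₐ[ℚ] K) = k := by
    rw [← Nat.card_eq_fintype_card, IsGalois.card_aut_eq_finrank, hdeg]
  have hsumT : ∑ σ : K ≃ₐ[ℚ] K, (Finset.univ.filter (L σ)).card = k * p^(k-2) := by
    rw [Finset.sum_congr rfl (fun σ _ => hTcard σ), Finset.sum_const, Finset.card_univ, hG,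
      smul_eq_mul]
  have hu : N ≤ k * p^(k-2) := by
    rw [hN, ← hsumT]
    exact count_upper L
  have hpair : ∑ q ∈ (Finset.univ : Finset (K ≃ₐ[ℚ] K)).offDiag,
      (Finset.univ.filter (fun x => L q.1 x ∧ L q.2 x)).card ≤ k * k * p^(k-3) := by
    calc ∑ q ∈ (Finset.univ : Finset (K ≃ₐ[ℚ] K)).offDiag,
        (Finset.univ.filter (fun x => L q.1 x ∧ L q.2 x)).card
        ≤ ∑ _q ∈ (Finset.univ : Finset (K ≃ₐ[ℚ] K)).offDiag, p^(k-3) :=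
          Finset.sum_le_sum (fun q hq => hTpair q.1 q.2 (Finset.mem_offDiag.mp hq).2.2)
      _ = (Finset.univ : Finset (K ≃ₐ[ℚ] K)).offDiag.card * p^(k-3) := by
          rw [Finset.sum_const, smul_eq_mul]
      _ ≤ k * k * p^(k-3) := by
          apply Nat.mul_le_mul_right
          rw [Finset.offDiag_card, Finset.card_univ, hG]
          omega
  have hl : k * p^(k-2) ≤ N + k * k * p^(k-3) := by
    have hcc := count_core L
    rw [hsumT, ← hN] at hcc
    omega
  -- real arithmetic
  have hppos : (0:ℝ) < p := by exact_mod_cast hp.pos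
  have hpk2 : (0:ℝ) < (p:ℝ)^(k-2) := by positivity
  have hNat : Nat.card {x : Fin (k-1) → ZMod p //
      (p:ℤ) ∣ incNormForm K k ω (fun i => ((x i).val : ℤ))} = N := by
    rw [Nat.card_eq_fintype_card, hN, Fintype.card_subtype]
    rw [Finset.filter_congr (fun x _ => hcond x)]
  have hvr : varrho K k ω p = (N:ℝ) / (p:ℝ)^(k-2) := by rw [varrho, hNat]
  have he1 : ((p:ℝ)^(k-3)) * p = (p:ℝ)^(k-2) := by
    rw [← pow_succ]
    congr 1
    clear hNat
    omega
  have huR : (N:ℝ) ≤ (k:ℝ) * (p:ℝ)^(k-2) := by exact_mod_cast hu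
  have hlR : (k:ℝ) * (p:ℝ)^(k-2) ≤ (N:ℝ) + (k:ℝ)*(k:ℝ)*(p:ℝ)^(k-3) := by exact_mod_cast hl
  have e2 : (k:ℝ)^2/p * (p:ℝ)^(k-2) = (k:ℝ)*(k:ℝ)*(p:ℝ)^(k-3) := by
    rw [← he1]
    field_simp
  rw [hvr, abs_le]
  have hq1 : (k:ℝ) - (k:ℝ)^2/p ≤ (N:ℝ) / (p:ℝ)^(k-2) := by
    rw [le_div_iff₀ hpk2]
    nlinarith [hlR, e2]
  have hq2 : (N:ℝ) / (p:ℝ)^(k-2) ≤ (k:ℝ) := by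
    rw [div_le_iff₀ hpk2]
    linarith [huR]
  have hq3 : 0 ≤ (k:ℝ)^2/p := by positivity
  constructor
  · linarith
  · linarith

end Main

/-- ϱ(p) = k + O(p^{-1+1/k}) for p splitting completely. -/
theorem varrho_split_prime
    (K : Type) [Field K] [NumberField K] [IsGalois ℚ K] (k : ℕ) (hk : 3 ≤ k)
    (hdeg : Module.finrank ℚ K = k)
    (ω : Module.Basis (Fin k) ℤ (𝓞 K)) (hω1 : ω ⟨0, by omega⟩ = 1) :
    ∃ C : ℝ, ∀ p : ℕ, p.Prime →
      -- p splits completely, i.e. the prime ideals above p have degree one: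
      (∀ P : Ideal (𝓞 K), P.IsMaximal → (p : 𝓞 K) ∈ P → Ideal.absNorm P = p) →
      |varrho K k ω p - k| ≤ C * (p : ℝ) ^ (-1 + 1 / (k : ℝ)) := by
  classical
  have hD0 : sepProd K k ω ≠ 0 := sepProd_ne_zero K k ω
  refine ⟨(k:ℝ)^2 + ∑ d ∈ (sepProd K k ω).natAbs.divisors,
      |varrho K k ω d - k| * (d:ℝ) ^ (1 - 1/(k:ℝ)), ?_⟩
  intro p hp hsplit
  have hppos : (0:ℝ) < p := by exact_mod_cast hp.pos
  have hrpos : (0:ℝ) < (p:ℝ) ^ (-1 + 1/(k:ℝ)) := Real.rpow_pos_of_pos hppos _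
  have hterm_nonneg : ∀ d ∈ (sepProd K k ω).natAbs.divisors,
      0 ≤ |varrho K k ω d - k| * (d:ℝ) ^ (1 - 1/(k:ℝ)) :=
    fun d _ => mul_nonneg (abs_nonneg _) (Real.rpow_nonneg (Nat.cast_nonneg d) _)
  have hsum_nonneg : 0 ≤ ∑ d ∈ (sepProd K k ω).natAbs.divisors,
      |varrho K k ω d - k| * (d:ℝ) ^ (1 - 1/(k:ℝ)) :=
    Finset.sum_nonneg hterm_nonneg
  by_cases hgood : (p:ℤ) ∣ sepProd K k ω
  · -- "bad" prime: p divides sepProd, use the finite-sum part of the constant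
    have hpdvd : p ∣ (sepProd K k ω).natAbs := by
      have := Int.natAbs_dvd_natAbs.mpr hgood
      simpa using this
    have hmem : p ∈ (sepProd K k ω).natAbs.divisors :=
      Nat.mem_divisors.mpr ⟨hpdvd, Int.natAbs_ne_zero.mpr hD0⟩
    have hterm : |varrho K k ω p - k| * (p:ℝ) ^ (1 - 1/(k:ℝ))
        ≤ ∑ d ∈ (sepProd K k ω).natAbs.divisors,
            |varrho K k ω d - k| * (d:ℝ) ^ (1 - 1/(k:ℝ)) :=
      Finset.single_le_sum hterm_nonneg hmem
    have hmul : (p:ℝ) ^ (1 - 1/(k:ℝ)) * (p:ℝ) ^ (-1 + 1/(k:ℝ)) = 1 := by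
      rw [← Real.rpow_add hppos]
      norm_num
    have hk2 : (0:ℝ) ≤ (k:ℝ)^2 := by positivity
    calc |varrho K k ω p - k|
        = (|varrho K k ω p - k| * (p:ℝ) ^ (1 - 1/(k:ℝ))) * (p:ℝ) ^ (-1 + 1/(k:ℝ)) := by
          rw [mul_assoc, hmul, mul_one]
      _ ≤ ((k:ℝ)^2 + ∑ d ∈ (sepProd K k ω).natAbs.divisors,
            |varrho K k ω d - k| * (d:ℝ) ^ (1 - 1/(k:ℝ))) * (p:ℝ) ^ (-1 + 1/(k:ℝ)) := by
          apply mul_le_mul_of_nonneg_right _ hrpos.le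
          linarith
  · -- "good" prime: use the main estimate
    have hb := good_prime_bound K k hk hdeg ω hω1 p hp hsplit hgood
    have h2 : 1 ≤ (p:ℝ) ^ (1/(k:ℝ)) := by
      apply Real.one_le_rpow
      · exact_mod_cast hp.one_lt.le
      · positivity
    have h1 : (k:ℝ)^2 / p ≤ (k:ℝ)^2 * (p:ℝ) ^ (-1 + 1/(k:ℝ)) := by
      rw [Real.rpow_add hppos, Real.rpow_neg_one, div_eq_mul_inv]
      have h3 : (0:ℝ) ≤ (k:ℝ)^2 * (p:ℝ)⁻¹ := by positivity
      nlinarith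
    calc |varrho K k ω p - k| ≤ (k:ℝ)^2 / p := hb
      _ ≤ (k:ℝ)^2 * (p:ℝ) ^ (-1 + 1/(k:ℝ)) := h1
      _ ≤ ((k:ℝ)^2 + ∑ d ∈ (sepProd K k ω).natAbs.divisors,
            |varrho K k ω d - k| * (d:ℝ) ^ (1 - 1/(k:ℝ))) * (p:ℝ) ^ (-1 + 1/(k:ℝ)) := by
          apply mul_le_mul_of_nonneg_right _ hrpos.le
          linarith

end
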